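/- Let k be a division ring and f : k² → k² a bijection with f(0) = 0 that takes every left affine line to a right affine line and every two-sided affine line to a two-sided affine line. Then f is additive: f(x + y) = f(x) + f(y) for all x, y ∈ k². -/

import Mathlib

open Function Set

variable {k : Type*}

/-- `L` is a left affine line in `k²`. -/
def IsLeftAffLine [DivisionRing k] (L : Set (k × k)) : Prop :=
  ∃ (v : k × k) (S : Submodule k (k × k)),
    L = (v + ·) '' (S : Set (k × k)) ∧ Module.finrank k S = 1

/-- `L` is a right affine line in `k²` (right modules encoded via `kᵐᵒᵖ`). -/
def IsRightAffLine [DivisionRing k] (L : Set (k × k)) : Prop :=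
  ∃ (v : k × k) (S : Submodule kᵐᵒᵖ (k × k)),
    L = (v + ·) '' (S : Set (k × k)) ∧ Module.finrank kᵐᵒᵖ S = 1

section Generic

variable {K V : Type*} [DivisionRing K] [AddCommGroup V] [Module K V]

lemma aux_exists_gen (S : Submodule K V) (h : Module.finrank K S = 1) :
    ∃ d : V, d ≠ 0 ∧ S = Submodule.span K {d} := by
  obtain ⟨⟨d, hdS⟩, hd0, hgen⟩ := finrank_eq_one_iff'.mp h
  have hd0' : d ≠ 0 := by simpa [Submodule.mk_eq_zero] using hd0
  refine ⟨d, hd0', le_antisymm (fun s hs => ?_) ?_⟩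
  · obtain ⟨c, hc⟩ := hgen ⟨s, hs⟩
    have : c • d = s := congrArg Subtype.val hc
    exact Submodule.mem_span_singleton.mpr ⟨c, this⟩
  · rw [Submodule.span_le, Set.singleton_subset_iff]
    exact hdS

lemma aux_mem_coset {S : Submodule K V} {v p : V} :
    p ∈ (v + ·) '' (S : Set V) ↔ p - v ∈ S := by
  constructor
  · rintro ⟨s, hs, rfl⟩
    simpa using hs
  · intro h
    exact ⟨p - v, h, show v + (p - v) = p by abel⟩

lemma aux_coset_rebase {S : Submodule K V} {v p : V} (hp : p ∈ (v + ·) '' (S : Set V)) :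
    (v + ·) '' (S : Set V) = (p + ·) '' (S : Set V) := by
  have hpv : p - v ∈ S := aux_mem_coset.mp hp
  ext q
  rw [aux_mem_coset, aux_mem_coset]
  constructor
  · intro h
    have : q - v - (p - v) ∈ S := S.sub_mem h hpv
    simpa [sub_sub_sub_cancel_right] using this
  · intro h
    have : q - p + (p - v) ∈ S := S.add_mem h hpv
    simpa [sub_add_sub_cancel] using this

lemma aux_indep_of {x z : V} (hx : x ≠ 0) (hz : z ∉ Submodule.span K {x}) :
    LinearIndependent K ![x, z] := by
  rw [linearIndependent_fin2]
  refine ⟨by simpa using fun h : z = 0 => hz (h ▸ Submodule.zero_mem _), fun a ha => ?_⟩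
  simp only [Matrix.cons_val_one, Matrix.head_cons, Matrix.cons_val_zero] at ha
  rcases eq_or_ne a 0 with rfl | ha0
  · exact hx (by simpa using ha.symm)
  · exact hz (Submodule.mem_span_singleton.mpr
      ⟨a⁻¹, by rw [← ha, smul_smul, inv_mul_cancel₀ ha0, one_smul]⟩)

lemma aux_span_eq_span {d p : V} (hp : p ∈ Submodule.span K {d}) (hp0 : p ≠ 0) :
    Submodule.span K {p} = Submodule.span K {d} := by
  obtain ⟨c, rfl⟩ := Submodule.mem_span_singleton.mp hp
  have hc : c ≠ 0 := fun h => hp0 (by simp [h])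
  exact Submodule.span_singleton_smul_eq (IsUnit.mk0 c hc) d

lemma aux_meet (h2 : Module.finrank K V = 2) {d1 d2 : V}
    (hind : LinearIndependent K ![d1, d2]) (v1 v2 : V) :
    ∃ p : V, p - v1 ∈ Submodule.span K {d1} ∧ p - v2 ∈ Submodule.span K {d2} := by
  have hcard : Fintype.card (Fin 2) = Module.finrank K V := by simp [h2]
  let b := basisOfLinearIndependentOfCardEqFinrank hind hcard
  have hb : ⇑b = ![d1, d2] := coe_basisOfLinearIndependentOfCardEqFinrank hind hcard
  have htop : Submodule.span K {d1, d2} = ⊤ := by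
    have hsp := b.span_eq
    rw [hb] at hsp
    have hrange : Set.range ![d1, d2] = {d1, d2} := by
      ext w
      simp [Fin.exists_fin_two, or_comm]
    rwa [hrange] at hsp
  have hmem : v2 - v1 ∈ Submodule.span K {d1, d2} := htop ▸ Submodule.mem_top
  obtain ⟨a, c, hac⟩ := Submodule.mem_span_pair.mp hmem
  refine ⟨v1 + a • d1, by simpa using Submodule.mem_span_singleton.mpr ⟨a, rfl⟩, ?_⟩
  refine Submodule.mem_span_singleton.mpr ⟨-c, ?_⟩
  have hv2 : v2 = v1 + (a • d1 + c • d2) := by rw [hac]; abel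
  rw [neg_smul, hv2]
  abel

end Generic

section Plane

variable [DivisionRing k]

private noncomputable def auxOpEquiv : k ≃ₗ[kᵐᵒᵖ] kᵐᵒᵖ where
  toFun := MulOpposite.op
  invFun := MulOpposite.unop
  map_add' _ _ := rfl
  map_smul' c a := by
    simp only [RingHom.id_apply, smul_eq_mul]
    rw [MulOpposite.smul_eq_mul_unop, MulOpposite.op_mul, MulOpposite.op_unop]
  left_inv _ := rfl
  right_inv _ := rfl

lemma aux_finrank_op : Module.finrank kᵐᵒᵖ (k × k) = 2 := by
  have e : (k × k) ≃ₗ[kᵐᵒᵖ] (kᵐᵒᵖ × kᵐᵒᵖ) := LinearEquiv.prodCongr auxOpEquiv auxOpEquiv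
  rw [LinearEquiv.finrank_eq e]
  rw [Module.finrank_prod, Module.finrank_self]

lemma aux_finrank_left : Module.finrank k (k × k) = 2 := by
  rw [Module.finrank_prod, Module.finrank_self]

lemma aux_exists_indep {x : k × k} (hx : x ≠ 0) :
    ∃ z : k × k, z ∉ Submodule.span k {x} := by
  by_contra h
  push_neg at h
  have htop : Submodule.span k {x} = ⊤ := Submodule.eq_top_iff'.mpr h
  have h1 : Module.finrank k (Submodule.span k {x}) = 1 := finrank_span_singleton hx
  rw [htop, finrank_top, aux_finrank_left] at h1
  omega

end Plane

section Main

variable [DivisionRing k] (f : k × k → k × k)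
variable (hbij : Function.Bijective f) (h0 : f 0 = 0)
variable (hL : ∀ L : Set (k × k), IsLeftAffLine L → IsRightAffLine (f '' L))

include hbij h0 hL

/-- Image of a line through the origin. -/
lemma aux_image_span {p : k × k} (hp : p ≠ 0) :
    f '' (Submodule.span k {p} : Set (k × k)) = (Submodule.span kᵐᵒᵖ {f p} : Set (k × k)) := by
  have hleft : IsLeftAffLine (Submodule.span k {p} : Set (k × k)) :=
    ⟨0, Submodule.span k {p}, by ext q; simp, finrank_span_singleton hp⟩
  obtain ⟨w, S, hE, hF⟩ := hL _ hleft
  obtain ⟨d, hd0, rfl⟩ := aux_exists_gen S hF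
  have h0mem : (0 : k × k) ∈ f '' (Submodule.span k {p} : Set (k × k)) :=
    ⟨0, Submodule.zero_mem _, h0⟩
  have hpmem : f p ∈ f '' (Submodule.span k {p} : Set (k × k)) :=
    Set.mem_image_of_mem f (Submodule.mem_span_singleton_self p)
  rw [hE] at h0mem hpmem ⊢
  rw [aux_coset_rebase h0mem] at hpmem ⊢
  have himg : ((0 : k × k) + ·) '' (Submodule.span kᵐᵒᵖ {d} : Set (k × k))
      = (Submodule.span kᵐᵒᵖ {d} : Set (k × k)) := by ext q; simp
  rw [himg] at hpmem ⊢
  have hfp0 : f p ≠ 0 := fun h => hp (hbij.injective (h.trans h0.symm))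
  rw [aux_span_eq_span hpmem hfp0]

/-- Image of a translated line: a parallel right line through the image of the basepoint. -/
lemma aux_image_line {p q : k × k} (hq : q ≠ 0) (hpq : p ∉ Submodule.span k {q}) :
    f '' ((p + ·) '' (Submodule.span k {q} : Set (k × k)))
      = (f p + ·) '' (Submodule.span kᵐᵒᵖ {f q} : Set (k × k)) := by
  have hleft : IsLeftAffLine ((p + ·) '' (Submodule.span k {q} : Set (k × k))) :=
    ⟨p, Submodule.span k {q}, rfl, finrank_span_singleton hq⟩
  obtain ⟨w, S, hE, hF⟩ := hL _ hleft
  obtain ⟨d, hd0, rfl⟩ := aux_exists_gen S hF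
  have hpmem : f p ∈ f '' ((p + ·) '' (Submodule.span k {q} : Set (k × k))) :=
    Set.mem_image_of_mem f (aux_mem_coset.mpr (by simpa using Submodule.zero_mem _))
  -- disjointness of the two original lines
  have hdisj : ((p + ·) '' (Submodule.span k {q} : Set (k × k)))
      ∩ (Submodule.span k {q} : Set (k × k)) = ∅ := by
    ext r
    simp only [Set.mem_inter_iff, Set.mem_empty_iff_false, iff_false, not_and]
    intro hr1 hr2
    have : r - p ∈ Submodule.span k {q} := aux_mem_coset.mp hr1
    exact hpq (by simpa using Submodule.sub_mem _ hr2 this)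
  -- images are disjoint
  have himdisj : (f '' ((p + ·) '' (Submodule.span k {q} : Set (k × k))))
      ∩ (f '' (Submodule.span k {q} : Set (k × k))) = ∅ := by
    rw [← Set.image_inter hbij.injective, hdisj, Set.image_empty]
  rw [hE] at hpmem ⊢
  rw [aux_coset_rebase hpmem]
  rw [hE, aux_coset_rebase hpmem, aux_image_span f hbij h0 hL hq] at himdisj
  have hfq0 : f q ≠ 0 := fun h => hq (hbij.injective (h.trans h0.symm))
  -- show span {d} = span {f q}
  have hspan : Submodule.span kᵐᵒᵖ {d} = Submodule.span kᵐᵒᵖ {f q} := by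
    by_contra hne
    have hdnot : d ∉ Submodule.span kᵐᵒᵖ {f q} := fun h => hne (aux_span_eq_span h hd0)
    have hind : LinearIndependent kᵐᵒᵖ ![f q, d] := aux_indep_of hfq0 hdnot
    obtain ⟨r, hr1, hr2⟩ := aux_meet aux_finrank_op hind 0 (f p)
    have hrmem1 : r ∈ (Submodule.span kᵐᵒᵖ {f q} : Set (k × k)) := by simpa using hr1
    have hrmem2 : r ∈ (f p + ·) '' (Submodule.span kᵐᵒᵖ {d} : Set (k × k)) :=
      aux_mem_coset.mpr hr2
    have : r ∈ (∅ : Set (k × k)) := himdisj ▸ Set.mem_inter hrmem2 hrmem1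
    exact this
  rw [hspan]

/-- The independent case of additivity. -/
lemma aux_indep_case {x y : k × k} (hxy : LinearIndependent k ![x, y]) :
    f (x + y) = f x + f y := by
  have h2 := linearIndependent_fin2.mp hxy
  simp only [Matrix.cons_val_one, Matrix.head_cons, Matrix.cons_val_zero] at h2
  obtain ⟨hy0, hay⟩ := h2
  have hx0 : x ≠ 0 := fun h => hay 0 (by simp [h])
  have hxny : x ∉ Submodule.span k {y} := by
    intro h
    obtain ⟨a, ha⟩ := Submodule.mem_span_singleton.mp h
    exact hay a ha
  have hynx : y ∉ Submodule.span k {x} := by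
    intro h
    obtain ⟨a, ha⟩ := Submodule.mem_span_singleton.mp h
    have ha0 : a ≠ 0 := by
      intro h'
      rw [h', zero_smul] at ha
      exact hy0 ha.symm
    exact hay a⁻¹ (by rw [← ha, smul_smul, inv_mul_cancel₀ ha0, one_smul])
  have hfx0 : f x ≠ 0 := fun h => hx0 (hbij.injective (h.trans h0.symm))
  have hfy0 : f y ≠ 0 := fun h => hy0 (hbij.injective (h.trans h0.symm))
  -- independence of images
  have hfynot : f y ∉ Submodule.span kᵐᵒᵖ {f x} := by
    intro h
    have : f y ∈ f '' (Submodule.span k {x} : Set (k × k)) := by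
      rw [aux_image_span f hbij h0 hL hx0]; exact h
    obtain ⟨u, hu, huy⟩ := this
    exact hynx (hbij.injective huy ▸ hu)
  have hfind : LinearIndependent kᵐᵒᵖ ![f x, f y] := aux_indep_of hfx0 hfynot
  -- the two lines through x + y
  have hm1 : x + y ∈ (x + ·) '' (Submodule.span k {y} : Set (k × k)) :=
    aux_mem_coset.mpr (by simpa using Submodule.mem_span_singleton_self y)
  have hm2 : x + y ∈ (y + ·) '' (Submodule.span k {x} : Set (k × k)) :=
    aux_mem_coset.mpr (by
      have hxx : x + y - y = x := by abel
      rw [hxx]; exact Submodule.mem_span_singleton_self x)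
  have hi1 : f (x + y) ∈ (f x + ·) '' (Submodule.span kᵐᵒᵖ {f y} : Set (k × k)) := by
    rw [← aux_image_line f hbij h0 hL hy0 hxny]
    exact Set.mem_image_of_mem f hm1
  have hi2 : f (x + y) ∈ (f y + ·) '' (Submodule.span kᵐᵒᵖ {f x} : Set (k × k)) := by
    rw [← aux_image_line f hbij h0 hL hx0 hynx]
    exact Set.mem_image_of_mem f hm2
  obtain ⟨s, hs⟩ := Submodule.mem_span_singleton.mp (aux_mem_coset.mp hi1)
  obtain ⟨t, ht⟩ := Submodule.mem_span_singleton.mp (aux_mem_coset.mp hi2)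
  -- hs : s • f y = f (x+y) - f x, ht : t • f x = f (x+y) - f y
  have hxy1 : f (x + y) = f x + s • f y := by rw [hs]; abel
  have hxy2 : f (x + y) = f y + t • f x := by rw [ht]; abel
  have h' : f x + s • f y = f y + t • f x := hxy1.symm.trans hxy2
  have hkey : (1 - t) • f x + (s - 1) • f y = 0 := by
    calc (1 - t) • f x + (s - 1) • f y
        = (f x + s • f y) - (f y + t • f x) := by
          rw [sub_smul, sub_smul, one_smul, one_smul]; abel
      _ = 0 := by rw [h', sub_self]
  obtain ⟨h1, h2'⟩ := LinearIndependent.pair_iff.mp hfind (1 - t) (s - 1) hkey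
  have hs1 : s = 1 := sub_eq_zero.mp h2'
  rw [hxy1, hs1, one_smul]

/-- f preserves negation. -/
lemma aux_neg (z : k × k) : f (-z) = -f z := by
  rcases eq_or_ne z 0 with rfl | hz0
  · simp [h0]
  obtain ⟨w, hw⟩ := aux_exists_indep hz0
  have hw0 : w ≠ 0 := fun h => hw (h ▸ Submodule.zero_mem _)
  -- w + z and -z are independent
  have hwz0 : w + z ≠ 0 := by
    intro h
    have hwneg : w = -z := eq_neg_of_add_eq_zero_left h
    refine hw (hwneg ▸ ?_)
    exact Submodule.neg_mem _ (Submodule.mem_span_singleton_self z)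
  have hnz : -z ∉ Submodule.span k {w + z} := by
    intro h
    obtain ⟨a, ha⟩ := Submodule.mem_span_singleton.mp h
    -- ha : a • (w + z) = -z
    rcases eq_or_ne a 0 with rfl | ha0
    · rw [zero_smul] at ha
      exact hz0 (neg_eq_zero.mp ha.symm)
    · rw [smul_add] at ha
      have h2 : a • w = -z - a • z := eq_sub_of_add_eq ha
      have h3 : w = a⁻¹ • (-z - a • z) := by
        rw [← h2, smul_smul, inv_mul_cancel₀ ha0, one_smul]
      apply hw
      rw [h3]
      refine Submodule.smul_mem _ _ (Submodule.sub_mem _ ?_ ?_)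
      · exact Submodule.neg_mem _ (Submodule.mem_span_singleton_self z)
      · exact Submodule.smul_mem _ _ (Submodule.mem_span_singleton_self z)
  have hind1 : LinearIndependent k ![w + z, -z] := aux_indep_of hwz0 hnz
  -- z not in span of w
  have hznw : z ∉ Submodule.span k {w} := by
    intro h
    obtain ⟨a, ha⟩ := Submodule.mem_span_singleton.mp h
    have ha0 : a ≠ 0 := by
      intro h'
      rw [h', zero_smul] at ha
      exact hz0 ha.symm
    exact hw (Submodule.mem_span_singleton.mpr
      ⟨a⁻¹, by rw [← ha, smul_smul, inv_mul_cancel₀ ha0, one_smul]⟩)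
  have hind2 : LinearIndependent k ![w, z] := aux_indep_of hw0 hznw
  have e1 : f ((w + z) + -z) = f (w + z) + f (-z) := aux_indep_case f hbij h0 hL hind1
  have e2 : f (w + z) = f w + f z := aux_indep_case f hbij h0 hL hind2
  have hwz : (w + z) + -z = w := by abel
  rw [hwz, e2, add_assoc] at e1
  -- e1 : f w = f w + (f z + f (-z))
  have hzero : f z + f (-z) = 0 := (left_eq_add.mp e1)
  exact eq_neg_of_add_eq_zero_right hzero

end Main

/-- Lemma 9 (abgroups): a bijection of `k²` fixing `0`, taking left affine lines to
right affine lines and two-sided affine lines to two-sided affine lines, is additive. -/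
theorem stmt_11 [DivisionRing k] (f : k × k → k × k)
    (hbij : Function.Bijective f) (h0 : f 0 = 0)
    (hL : ∀ L : Set (k × k), IsLeftAffLine L → IsRightAffLine (f '' L))
    (h2 : ∀ L : Set (k × k), IsLeftAffLine L ∧ IsRightAffLine L →
      IsLeftAffLine (f '' L) ∧ IsRightAffLine (f '' L)) :
    ∀ x y : k × k, f (x + y) = f x + f y := by
  intro x y
  rcases eq_or_ne x 0 with rfl | hx0
  · simp [h0]
  rcases eq_or_ne y 0 with rfl | hy0
  · simp [h0]
  by_cases hind : LinearIndependent k ![x, y]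
  · exact aux_indep_case f hbij h0 hL hind
  -- dependent case: y = c • x with c ≠ 0
  have hdep : ∃ c : k, c ≠ 0 ∧ y = c • x := by
    rw [linearIndependent_fin2] at hind
    push_neg at hind
    simp only [Matrix.cons_val_one, Matrix.head_cons, Matrix.cons_val_zero] at hind
    obtain ⟨a, ha⟩ := hind hy0
    have ha0 : a ≠ 0 := by
      intro h'
      rw [h', zero_smul] at ha
      exact hx0 ha.symm
    exact ⟨a⁻¹, inv_ne_zero ha0, by rw [← ha, smul_smul, inv_mul_cancel₀ ha0, one_smul]⟩
  obtain ⟨c, hc0, rfl⟩ := hdep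
  rcases eq_or_ne c (-1) with rfl | hcn1
  · -- y = -x
    have hxx : x + (-1 : k) • x = 0 := by simp
    rw [hxx, h0]
    have hneg := aux_neg f hbij h0 hL x
    rw [show (-1 : k) • x = -x by simp, hneg]
    abel
  -- generic dependent case
  obtain ⟨z, hz⟩ := aux_exists_indep hx0
  have hz0 : z ≠ 0 := fun h => hz (h ▸ Submodule.zero_mem _)
  have hxz0 : x + z ≠ 0 := by
    intro h
    have hzneg : z = -x := eq_neg_of_add_eq_zero_right h
    refine hz (hzneg ▸ ?_)
    exact Submodule.neg_mem _ (Submodule.mem_span_singleton_self x)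
  -- x + z, c•x - z independent
  have hind1 : LinearIndependent k ![x + z, c • x - z] := by
    apply aux_indep_of hxz0
    intro h
    obtain ⟨a, ha⟩ := Submodule.mem_span_singleton.mp h
    -- ha : a • (x + z) = c • x - z
    rw [smul_add] at ha
    have h4 : a • z = c • x - z - a • x := by rw [← ha]; abel
    have ha' : (a + 1) • z = (c - a) • x := by
      rw [add_smul, sub_smul, one_smul, h4]; abel
    rcases eq_or_ne (a + 1) 0 with h1 | h1
    · rw [h1, zero_smul] at ha'
      rcases smul_eq_zero.mp ha'.symm with hca | hx
      · have haeq : a = -1 := eq_neg_of_add_eq_zero_left h1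
        have : c = a := sub_eq_zero.mp hca
        exact hcn1 (this.trans haeq)
      · exact hx0 hx
    · apply hz
      have hzeq : z = (a + 1)⁻¹ • ((c - a) • x) := by
        rw [← ha', smul_smul, inv_mul_cancel₀ h1, one_smul]
      rw [hzeq, smul_smul]
      exact Submodule.smul_mem _ _ (Submodule.mem_span_singleton_self x)
  -- x, z independent
  have hind2 : LinearIndependent k ![x, z] := aux_indep_of hx0 hz
  -- c•x, -z independent
  have hcx0 : c • x ≠ 0 := fun h => (smul_eq_zero.mp h).elim hc0 hx0
  have hind3 : LinearIndependent k ![c • x, -z] := by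
    apply aux_indep_of hcx0
    intro h
    obtain ⟨a, ha⟩ := Submodule.mem_span_singleton.mp h
    -- ha : a • (c • x) = -z
    apply hz
    have h' : (a * c) • x = -z := by rw [← smul_smul]; exact ha
    have hzeq : z = (-(a * c)) • x := by rw [neg_smul, h', neg_neg]
    rw [hzeq]
    exact Submodule.smul_mem _ _ (Submodule.mem_span_singleton_self x)
  have key : (x + z) + (c • x - z) = x + c • x := by abel
  have e1 : f (x + c • x) = f (x + z) + f (c • x - z) := by
    rw [← key]; exact aux_indep_case f hbij h0 hL hind1
  have e2 : f (x + z) = f x + f z := aux_indep_case f hbij h0 hL hind2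
  have e3 : f (c • x - z) = f (c • x) + f (-z) := by
    have hsub : c • x - z = c • x + -z := by abel
    rw [hsub]; exact aux_indep_case f hbij h0 hL hind3
  have e4 : f (-z) = -f z := aux_neg f hbij h0 hL z
  rw [e1, e2, e3, e4]
  abel
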